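/- Let G = ∏_{j=1}^{s} (ℤ/p_jℤ)^{e_j} where the p_j are distinct primes and e_j ≥ 1. Then the diameter of G with respect to any symmetric generating set containing the identity is strictly less than (2/3)·max{e_j : 1 ≤ j ≤ s}·∏_{j=1}^{s} p_j. -/

import Mathlib

open Pointwise

/-- `sumSet S k` is the set of sums of exactly `k` elements of `S`
(sums of at most `k` elements when `0 ∈ S`). -/
def sumSet {G : Type*} [AddGroup G] (S : Set G) : ℕ → Set G
  | 0 => {0}
  | k + 1 => sumSet S k + S

section SumSetLemmas

variable {G : Type*} [AddGroup G] {S : Set G}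

theorem sumSet_zero : sumSet S 0 = {0} := rfl

theorem sumSet_succ (k : ℕ) : sumSet S (k + 1) = sumSet S k + S := rfl

theorem sumSet_add (a b : ℕ) : sumSet S (a + b) = sumSet S a + sumSet S b := by
  induction b with
  | zero =>
      simp only [Nat.add_zero, sumSet_zero]
      rw [Set.add_singleton]
      simp
  | succ n ih =>
      rw [← Nat.add_assoc, sumSet_succ, sumSet_succ, ih, add_assoc]

theorem mem_sumSet_add {a b : ℕ} {x y : G} (hx : x ∈ sumSet S a) (hy : y ∈ sumSet S b) :
    x + y ∈ sumSet S (a + b) := by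
  rw [sumSet_add]; exact Set.add_mem_add hx hy

theorem sumSet_mono (h0 : (0 : G) ∈ S) {a b : ℕ} (hab : a ≤ b) :
    sumSet S a ⊆ sumSet S b := by
  induction b with
  | zero =>
      have : a = 0 := Nat.le_zero.mp hab
      subst this; exact Set.Subset.rfl
  | succ n ih =>
      rcases Nat.lt_or_ge a (n + 1) with h | h
      · intro x hx
        have hx' : x ∈ sumSet S n := ih (Nat.lt_succ_iff.mp h) hx
        rw [sumSet_succ]
        simpa using Set.add_mem_add hx' h0
      · have : a = n + 1 := le_antisymm hab h
        subst this; exact Set.Subset.rfl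

theorem nsmul_mem_sumSet {g : G} (hg : g ∈ S) (n : ℕ) : n • g ∈ sumSet S n := by
  induction n with
  | zero => simp [sumSet_zero]
  | succ m ih =>
      rw [succ_nsmul, sumSet_succ]
      exact Set.add_mem_add ih hg

theorem zsmul_mem_sumSet (hsymm : -S = S) {g : G} (hg : g ∈ S) (c : ℤ) :
    c • g ∈ sumSet S c.natAbs := by
  rcases c with n | n
  · simpa using nsmul_mem_sumSet hg n
  · have hneg : -g ∈ S := by
      rw [← hsymm]; exact Set.neg_mem_neg.mpr hg
    have h1 : Int.negSucc n • g = (n + 1) • (-g) := by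
      rw [negSucc_zsmul, neg_nsmul]
    rw [h1]
    simpa using nsmul_mem_sumSet hneg (n + 1)

end SumSetLemmas

theorem sum_mem_sumSet {G : Type*} [AddCommGroup G] {S : Set G}
    {ι : Type*} (t : Finset ι) (f : ι → G) (n : ι → ℕ)
    (h : ∀ i ∈ t, f i ∈ sumSet S (n i)) :
    (∑ i ∈ t, f i) ∈ sumSet S (∑ i ∈ t, n i) := by
  classical
  induction t using Finset.induction_on with
  | empty => simp only [Finset.sum_empty]; exact Set.mem_singleton 0
  | @insert a t₀ hnot ih =>
      rw [Finset.sum_insert hnot, Finset.sum_insert hnot]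
      exact mem_sumSet_add (h a (Finset.mem_insert_self a t₀))
        (ih fun i hi => h i (Finset.mem_insert_of_mem hi))

/-- The diameter of `∏_j (ℤ/p_jℤ)^{e_j}` (distinct primes `p_j`, `e_j ≥ 1`) with respect to
any symmetric generating set containing `0` is `< (2/3)·max_j e_j·∏_j p_j`. -/
theorem diameter_abelian_product (s : ℕ) (hs : 1 ≤ s) (p e : Fin s → ℕ)
    (hp : ∀ j, (p j).Prime) (hpdist : Function.Injective p) (he : ∀ j, 1 ≤ e j)
    (S : Set (∀ j : Fin s, Fin (e j) → ZMod (p j)))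
    (h0 : (0 : ∀ j : Fin s, Fin (e j) → ZMod (p j)) ∈ S) (hsymm : -S = S)
    (hgen : AddSubgroup.closure S = ⊤) :
    ∃ k : ℕ, sumSet S k = Set.univ ∧
      (k : ℝ) < 2 / 3 * ((Finset.univ.sup e : ℕ) : ℝ) * ∏ j : Fin s, (p j : ℝ) := by
  classical
  have instF : ∀ j, Fact (p j).Prime := fun j => ⟨hp j⟩
  set Rrel : Finset (Fin s) → Fin s → ℕ :=
    fun J j => ∏ j' ∈ J.filter (fun j' => p j' < p j), p j' with hRrel
  set R : Fin s → ℕ := fun j => Rrel Finset.univ j with hR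
  -- Step 1 : each projection of S spans
  have hspan : ∀ j, Submodule.span (ZMod (p j)) ((fun g : (∀ j : Fin s, Fin (e j) → ZMod (p j)) => g j) '' S) = ⊤ := by
    intro j
    haveI := instF j
    have hsur : Function.Surjective (Pi.evalAddMonoidHom (fun j => Fin (e j) → ZMod (p j)) j) :=
      Function.surjective_eval j
    have hmap : AddSubgroup.closure ((fun g : (∀ j : Fin s, Fin (e j) → ZMod (p j)) => g j) '' S) = ⊤ := by
      have h2 := AddMonoidHom.map_closure
        (Pi.evalAddMonoidHom (fun j => Fin (e j) → ZMod (p j)) j) S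
      rw [hgen, AddSubgroup.map_top_of_surjective _ hsur] at h2
      exact h2.symm
    rw [eq_top_iff]
    intro v _
    have hv : v ∈ AddSubgroup.closure ((fun g : (∀ j : Fin s, Fin (e j) → ZMod (p j)) => g j) '' S) := by rw [hmap]; trivial
    have hle : AddSubgroup.closure ((fun g : (∀ j : Fin s, Fin (e j) → ZMod (p j)) => g j) '' S) ≤
        (Submodule.span (ZMod (p j)) ((fun g : (∀ j : Fin s, Fin (e j) → ZMod (p j)) => g j) '' S)).toAddSubgroup :=
      (AddSubgroup.closure_le _).mpr (fun w hw => Submodule.subset_span hw)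
    exact hle hv
  -- Step 2 : extract small spanning sets
  have hB : ∀ j, ∃ B : Finset (∀ j : Fin s, Fin (e j) → ZMod (p j)), ↑B ⊆ S ∧ B.card ≤ e j ∧
      Submodule.span (ZMod (p j)) ((fun g : (∀ j : Fin s, Fin (e j) → ZMod (p j)) => g j) '' ↑B) = ⊤ := by
    intro j
    haveI := instF j
    obtain ⟨t, htsub, htspan, htind⟩ :=
      exists_linearIndependent (ZMod (p j)) ((fun g : (∀ j : Fin s, Fin (e j) → ZMod (p j)) => g j) '' S)
    have htfin : t.Finite := htind.setFinite
    haveI := htfin.fintype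
    have hcard : t.toFinset.card ≤ e j := by
      have h2 := htind.fintype_card_le_finrank
      rw [Set.toFinset_card]
      simpa [Module.finrank_pi] using h2
    have hchoice : ∀ v ∈ t, ∃ g, g ∈ S ∧ (fun g : (∀ j : Fin s, Fin (e j) → ZMod (p j)) => g j) g = v := by
      intro v hv
      obtain ⟨g, hg, hgv⟩ := htsub hv
      exact ⟨g, hg, hgv⟩
    choose f hfS hfj using hchoice
    refine ⟨t.toFinset.attach.image (fun v => f v.1 (by
      have h3 := v.2; rwa [Set.mem_toFinset] at h3)), ?_, ?_, ?_⟩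
    · intro g hg
      simp only [Finset.coe_image, Set.mem_image] at hg
      obtain ⟨v, _, rfl⟩ := hg
      exact hfS _ _
    · calc _ ≤ t.toFinset.attach.card := Finset.card_image_le
        _ = t.toFinset.card := Finset.card_attach
        _ ≤ e j := hcard
    · have himg : t ⊆ (fun g : (∀ j : Fin s, Fin (e j) → ZMod (p j)) => g j) ''
          ↑(t.toFinset.attach.image (fun v => f v.1 (by
            have h3 := v.2; rwa [Set.mem_toFinset] at h3))) := by
        intro v hv
        rw [Finset.coe_image, Set.image_image]
        exact ⟨⟨v, by rwa [Set.mem_toFinset]⟩,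
          Finset.mem_coe.mpr (Finset.mem_attach _ _), hfj v hv⟩
      rw [eq_top_iff, ← hspan j, ← htspan]
      exact Submodule.span_mono himg
  choose Bf hBS hBcard hBspan using hB
  -- Step 3 : main induction
  have main : ∀ (n : ℕ) (J : Finset (Fin s)), J.card = n →
      (∀ j' ∉ J, ∀ j ∈ J, p j' < p j) → ∀ x : (∀ j : Fin s, Fin (e j) → ZMod (p j)), (∀ j ∉ J, x j = 0) →
      x ∈ sumSet S (∑ j ∈ J, e j * (R j * (p j / 2))) := by
    intro n
    induction n with
    | zero =>
        intro J hJcard _ x hx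
        have hJ : J = ∅ := Finset.card_eq_zero.mp hJcard
        subst hJ
        have hx0 : x = 0 := funext fun j => hx j (Finset.notMem_empty j)
        rw [Finset.sum_empty, hx0]
        exact Set.mem_singleton 0
    | succ n ih =>
        intro J hJcard hGood x hx
        have hJne : J.Nonempty := Finset.card_pos.mp (by omega)
        obtain ⟨j₀, hj₀J, hmin⟩ := J.exists_min_image p hJne
        haveI := instF j₀
        have hfilter : Finset.univ.filter (fun j' => p j' < p j₀) = Finset.univ \ J := by
          ext j'
          rw [Finset.mem_filter, Finset.mem_sdiff]
          simp only [Finset.mem_univ, true_and]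
          constructor
          · intro h hj'
            exact absurd (hmin j' hj') (not_le.mpr h)
          · intro h
            exact hGood j' h j₀ hj₀J
        have hdvd : ∀ j'' ∉ J, p j'' ∣ R j₀ := by
          intro j'' hj''
          apply Finset.dvd_prod_of_mem
          rw [hfilter]
          exact Finset.mem_sdiff.mpr ⟨Finset.mem_univ _, hj''⟩
        have hR0 : ((R j₀ : ℕ) : ZMod (p j₀)) ≠ 0 := by
          rw [Ne, ZMod.natCast_eq_zero_iff]
          intro hdvd'
          obtain ⟨j', hj'mem, hj'dvd⟩ :=
            (Nat.Prime.prime (hp j₀)).exists_mem_finset_dvd hdvd'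
          rw [Finset.mem_filter] at hj'mem
          have heq : p j₀ = p j' := (Nat.prime_dvd_prime_iff_eq (hp j₀) (hp j')).mp hj'dvd
          omega
        set B := Bf j₀ with hBdef
        have hxspan : ((R j₀ : ZMod (p j₀))⁻¹ • x j₀) ∈
            Submodule.span (ZMod (p j₀)) (Set.range (fun g : ↥B => (g : (∀ j : Fin s, Fin (e j) → ZMod (p j))) j₀)) := by
          have himg : (fun g : (∀ j : Fin s, Fin (e j) → ZMod (p j)) => g j₀) '' ↑B = Set.range (fun g : ↥B => (g : (∀ j : Fin s, Fin (e j) → ZMod (p j))) j₀) :=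
            Set.image_eq_range _ _
          rw [← himg, hBspan j₀]
          trivial
        rw [Submodule.mem_span_range_iff_exists_fun] at hxspan
        obtain ⟨c, hc⟩ := hxspan
        set d : ↥B → ℤ := fun g => (c g).valMinAbs with hd
        set y : (∀ j : Fin s, Fin (e j) → ZMod (p j)) := ∑ g : ↥B, ((R j₀ : ℤ) * d g) • (g : (∀ j : Fin s, Fin (e j) → ZMod (p j))) with hy
        have hymem : y ∈ sumSet S (e j₀ * (R j₀ * (p j₀ / 2))) := by
          have h1 : y ∈ sumSet S (∑ _g : ↥B, R j₀ * (p j₀ / 2)) := by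
            apply sum_mem_sumSet
            intro g _
            have h2 : ((R j₀ : ℤ) * d g) • (g : (∀ j : Fin s, Fin (e j) → ZMod (p j))) ∈
                sumSet S (((R j₀ : ℤ) * d g).natAbs) :=
              zsmul_mem_sumSet hsymm (hBS j₀ g.2) _
            apply sumSet_mono h0 _ h2
            rw [Int.natAbs_mul, Int.natAbs_natCast]
            exact Nat.mul_le_mul_left _ (ZMod.natAbs_valMinAbs_le _)
          apply sumSet_mono h0 _ h1
          rw [Finset.sum_const, Finset.card_univ, Fintype.card_coe, smul_eq_mul]
          exact Nat.mul_le_mul_right _ (hBcard j₀)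
        have hyj₀ : y j₀ = x j₀ := by
          have h1 : y j₀ = ∑ g : ↥B, (((R j₀ : ℤ) * d g) • (g : (∀ j : Fin s, Fin (e j) → ZMod (p j)))) j₀ := by
            rw [hy]; exact Finset.sum_apply _ _ _
          rw [h1]
          have hterm : ∀ g : ↥B, (((R j₀ : ℤ) * d g) • (g : (∀ j : Fin s, Fin (e j) → ZMod (p j)))) j₀
              = ((R j₀ : ZMod (p j₀)) * c g) • ((g : (∀ j : Fin s, Fin (e j) → ZMod (p j))) j₀) := by
            intro g
            have h2 : (((R j₀ : ℤ) * d g) • (g : (∀ j : Fin s, Fin (e j) → ZMod (p j)))) j₀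
                = ((R j₀ : ℤ) * d g) • ((g : (∀ j : Fin s, Fin (e j) → ZMod (p j))) j₀) := rfl
            rw [h2, ← Int.cast_smul_eq_zsmul (ZMod (p j₀))]
            have h5 : (((R j₀ : ℤ) * d g : ℤ) : ZMod (p j₀)) = (R j₀ : ZMod (p j₀)) * c g := by
              push_cast [hd]
              try ring
            rw [h5]
          rw [Finset.sum_congr rfl (fun g _ => hterm g)]
          have h3 : ∑ g : ↥B, ((R j₀ : ZMod (p j₀)) * c g) • ((g : (∀ j : Fin s, Fin (e j) → ZMod (p j))) j₀)
              = (R j₀ : ZMod (p j₀)) • ∑ g : ↥B, (c g) • ((g : (∀ j : Fin s, Fin (e j) → ZMod (p j))) j₀) := by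
            rw [Finset.smul_sum]
            exact Finset.sum_congr rfl (fun g _ => mul_smul _ _ _)
          rw [h3, hc, smul_inv_smul₀ hR0]
        have hyout : ∀ j'' , j'' ∉ J → y j'' = 0 := by
          intro j'' hj''
          haveI := instF j''
          have h1 : y j'' = ∑ g : ↥B, (((R j₀ : ℤ) * d g) • (g : (∀ j : Fin s, Fin (e j) → ZMod (p j)))) j'' := by
            rw [hy]; exact Finset.sum_apply _ _ _
          rw [h1]
          apply Finset.sum_eq_zero
          intro g _
          have h2 : (((R j₀ : ℤ) * d g) • (g : (∀ j : Fin s, Fin (e j) → ZMod (p j)))) j''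
              = ((R j₀ : ℤ) * d g) • ((g : (∀ j : Fin s, Fin (e j) → ZMod (p j))) j'') := rfl
          rw [h2, ← Int.cast_smul_eq_zsmul (ZMod (p j''))]
          have hz : (((R j₀ : ℤ) * d g : ℤ) : ZMod (p j'')) = 0 := by
            push_cast
            have h4 : ((R j₀ : ℕ) : ZMod (p j'')) = 0 := by
              rw [ZMod.natCast_eq_zero_iff]
              exact hdvd j'' hj''
            rw [h4, zero_mul]
          rw [hz, zero_smul]
        set J' := J.erase j₀ with hJ'
        have hGood' : ∀ j' ∉ J', ∀ j ∈ J', p j' < p j := by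
          intro j' hj' j hj
          by_cases hne : j' = j₀
          · have hjJ := Finset.mem_of_mem_erase hj
            have hjne : j ≠ j₀ := Finset.ne_of_mem_erase hj
            have h1 : p j₀ ≤ p j := hmin j hjJ
            have h2 : p j₀ ≠ p j := fun h => hjne (hpdist h.symm)
            rw [hne]
            omega
          · have hj'J : j' ∉ J := fun h => hj' (Finset.mem_erase.mpr ⟨hne, h⟩)
            exact hGood j' hj'J j (Finset.mem_of_mem_erase hj)
        have hx' : ∀ j ∉ J', (x - y) j = 0 := by
          intro j hj
          by_cases hne : j = j₀
          · show x j - y j = 0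
            rw [hne, hyj₀, sub_self]
          · have hjJ : j ∉ J := fun h => hj (Finset.mem_erase.mpr ⟨hne, h⟩)
            show x j - y j = 0
            rw [hx j hjJ, hyout j hjJ, sub_self]
        have hcard' : J'.card = n := by
          rw [hJ', Finset.card_erase_of_mem hj₀J, hJcard]
          omega
        have hrec := ih J' hcard' hGood' (x - y) hx'
        have hfinal := mem_sumSet_add hymem hrec
        rw [add_sub_cancel] at hfinal
        rw [hJ'] at hfinal
        have hsum : e j₀ * (R j₀ * (p j₀ / 2)) + ∑ j ∈ J.erase j₀, e j * (R j * (p j / 2))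
            = ∑ j ∈ J, e j * (R j * (p j / 2)) :=
          Finset.add_sum_erase J (fun j => e j * (R j * (p j / 2))) hj₀J
        rwa [hsum] at hfinal
  -- Step 4 : arithmetic bound
  have arith : ∀ (n : ℕ) (J : Finset (Fin s)), J.card = n → J.Nonempty →
      ((∑ j ∈ J, Rrel J j * (p j / 2) : ℕ) : ℝ) < 2 / 3 * ∏ j ∈ J, (p j : ℝ) := by
    intro n
    induction n with
    | zero =>
        intro J hJcard hJne
        rw [Finset.card_eq_zero.mp hJcard] at hJne
        exact absurd hJne (by simp)
    | succ n ih =>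
        intro J hJcard hJne
        obtain ⟨j₁, hj₁J, hmax⟩ := J.exists_max_image p hJne
        set J' := J.erase j₁ with hJ'
        have hppos : 0 < p j₁ := (hp j₁).pos
        have hfilt1 : J.filter (fun j' => p j' < p j₁) = J' := by
          ext j
          simp only [Finset.mem_filter, hJ', Finset.mem_erase]
          constructor
          · rintro ⟨h1, h2⟩
            refine ⟨?_, h1⟩
            intro h
            rw [h] at h2
            exact lt_irrefl _ h2
          · rintro ⟨h1, h2⟩
            have h3 := hmax j h2
            have h4 : p j ≠ p j₁ := fun h => h1 (hpdist h)
            exact ⟨h2, by omega⟩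
        have hRrel1 : Rrel J j₁ = ∏ j ∈ J', p j := by
          rw [hRrel]; simp only; rw [hfilt1]
        have hRreleq : ∀ j ∈ J', Rrel J j = Rrel J' j := by
          intro j hj
          rw [hRrel]
          simp only
          congr 1
          ext j'
          simp only [Finset.mem_filter, hJ', Finset.mem_erase]
          constructor
          · rintro ⟨h1, h2⟩
            refine ⟨⟨?_, h1⟩, h2⟩
            intro h
            rw [h] at h2
            have h3 := hmax j (Finset.mem_of_mem_erase hj)
            omega
          · rintro ⟨⟨h1, h2⟩, h3⟩
            exact ⟨h2, h3⟩
        have hsplit : (∑ j ∈ J, Rrel J j * (p j / 2))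
            = Rrel J j₁ * (p j₁ / 2) + ∑ j ∈ J', Rrel J' j * (p j / 2) := by
          rw [← Finset.add_sum_erase J _ hj₁J, ← hJ']
          congr 1
          exact Finset.sum_congr rfl (fun j hj => by rw [hRreleq j hj])
        have hprodsplit : ∏ j ∈ J, (p j : ℝ) = (p j₁ : ℝ) * ∏ j ∈ J', (p j : ℝ) :=
          (Finset.mul_prod_erase J _ hj₁J).symm
        have hhalf : ((p j₁ / 2 : ℕ) : ℝ) ≤ (p j₁ : ℝ) / 2 := by
          have h1 := Nat.cast_div_le (α := ℝ) (m := p j₁) (n := 2)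
          simpa using h1
        rcases Finset.eq_empty_or_nonempty J' with hJe | hJne'
        · rw [hsplit, hRrel1, hJe]
          simp only [Finset.sum_empty, Finset.prod_empty, add_zero, one_mul]
          rw [hprodsplit, hJe]
          simp only [Finset.prod_empty, mul_one]
          have h1 : (1 : ℝ) ≤ (p j₁ : ℝ) := by exact_mod_cast hppos
          calc ((p j₁ / 2 : ℕ) : ℝ) ≤ (p j₁ : ℝ) / 2 := hhalf
            _ < 2 / 3 * (p j₁ : ℝ) := by nlinarith
        · have hcard' : J'.card = n := by
            rw [hJ', Finset.card_erase_of_mem hj₁J, hJcard]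
            omega
          have hlt := ih J' hcard' hJne'
          obtain ⟨j₂, hj₂⟩ := hJne'
          have hp2 : 2 ≤ p j₂ := (hp j₂).two_le
          have hj₂lt : p j₂ < p j₁ := by
            have h1 := hmax j₂ (Finset.mem_of_mem_erase hj₂)
            have h2 : p j₂ ≠ p j₁ := fun h => (Finset.ne_of_mem_erase hj₂) (hpdist h)
            omega
          have h3 : 3 ≤ p j₁ := by omega
          obtain ⟨k, hk⟩ := (hp j₁).odd_of_ne_two (by omega)
          have hfl : p j₁ / 2 = k := by omega
          have hfl' : ((p j₁ / 2 : ℕ) : ℝ) = ((p j₁ : ℝ) - 1) / 2 := by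
            rw [hfl, hk]; push_cast; ring
          have hPpos : (0 : ℝ) < ∏ j ∈ J', (p j : ℝ) :=
            Finset.prod_pos (fun j _ => by exact_mod_cast (hp j).pos)
          have hcastR : ((Rrel J j₁ : ℕ) : ℝ) = ∏ j ∈ J', (p j : ℝ) := by
            rw [hRrel1]; push_cast; ring
          rw [hsplit]
          push_cast at hlt ⊢
          rw [hprodsplit, hcastR, hfl']
          have hple : (3 : ℝ) ≤ (p j₁ : ℝ) := by exact_mod_cast h3
          set P : ℝ := ∏ j ∈ J', (p j : ℝ) with hP
          set A : ℝ := ∑ j ∈ J', ((Rrel J' j : ℝ) * ((p j / 2 : ℕ) : ℝ)) with hA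
          nlinarith [hlt, hPpos, hple, mul_le_mul_of_nonneg_left
            (by nlinarith : ((p j₁ : ℝ) - 1) / 2 + 2 / 3 ≤ 2 / 3 * (p j₁ : ℝ)) hPpos.le]
  -- Step 5 : assemble
  refine ⟨∑ j, e j * (R j * (p j / 2)), ?_, ?_⟩
  · apply Set.eq_univ_of_forall
    intro x
    exact main s Finset.univ (by simp) (fun j' hj' => absurd (Finset.mem_univ j') hj') x
      (fun j hj => absurd (Finset.mem_univ j) hj)
  · set M := Finset.univ.sup e with hM
    have hM1 : 1 ≤ M := le_trans (he ⟨0, hs⟩) (Finset.le_sup (Finset.mem_univ (⟨0, hs⟩ : Fin s)))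
    have hkle : (∑ j, e j * (R j * (p j / 2))) ≤ M * ∑ j, R j * (p j / 2) := by
      rw [Finset.mul_sum]
      exact Finset.sum_le_sum fun j _ =>
        Nat.mul_le_mul_right _ (Finset.le_sup (Finset.mem_univ j))
    have hA := arith s Finset.univ (by simp) ⟨⟨0, hs⟩, Finset.mem_univ _⟩
    have hRA : (∑ j, R j * (p j / 2)) = ∑ j ∈ Finset.univ, Rrel Finset.univ j * (p j / 2) := by
      rfl
    have hMpos : (0 : ℝ) < (M : ℝ) := by exact_mod_cast hM1
    calc ((∑ j, e j * (R j * (p j / 2)) : ℕ) : ℝ)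
        ≤ ((M * ∑ j, R j * (p j / 2) : ℕ) : ℝ) := by exact_mod_cast hkle
      _ = (M : ℝ) * ((∑ j ∈ Finset.univ, Rrel Finset.univ j * (p j / 2) : ℕ) : ℝ) := by
          rw [hRA]; push_cast; ring
      _ < (M : ℝ) * (2 / 3 * ∏ j, (p j : ℝ)) := by
          exact mul_lt_mul_of_pos_left hA hMpos
      _ = 2 / 3 * (M : ℝ) * ∏ j, (p j : ℝ) := by ring
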